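/- Assume 0 < ν < 1 and let agent j play the time-threshold control b = Γ_{βʲ}(ψ) for some ψ ∈ [0,T], so that e^{−B(s)} = e^{−βʲ(s∧ψ)}. If ν < e^{−βʲψ}, then the full-effort control a* = Γ_{βⁱ}(T) (i.e. a*(t) = βⁱ for all t ∈ [0,T]) is a best response of agent i: Jⁱ(a, Γ_{βʲ}(ψ)) ≤ Jⁱ(Γ_{βⁱ}(T), Γ_{βʲ}(ψ)) for every admissible control a of agent i. (Paper's Theorem 2, first case.) -/

import Mathlib

open MeasureTheory Real Set

/-- Cumulative rate `A(t) = ∫₀ᵗ a(s) ds` of a control `a`. -/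
noncomputable def cum (a : ℝ → ℝ) (t : ℝ) : ℝ := ∫ s in (0:ℝ)..t, a s

/-- One-lock payoff of agent `i`:
`Jⁱ(a,b) = ∫₀ᵀ (e^{−B(s)} − ν A(s)) e^{−A(s)} a(s) ds − ν A(T) e^{−A(T)}`. -/
noncomputable def oneLockPayoff (T ν : ℝ) (a b : ℝ → ℝ) : ℝ :=
  (∫ s in (0:ℝ)..T,
      (Real.exp (-(cum b s)) - ν * cum a s) * Real.exp (-(cum a s)) * a s)
    - ν * cum a T * Real.exp (-(cum a T))

/-- Time-threshold control `Γ_β(ψ)(t) = β · 𝟙_{[0,ψ]}(t)`. -/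
noncomputable def threshold (β ψ : ℝ) : ℝ → ℝ :=
  fun t => if t ∈ Set.Icc (0:ℝ) ψ then β else 0

section helpers
variable {a : ℝ → ℝ} {M : ℝ}

lemma intInt_of_bounds (ha : Measurable a) (h0 : ∀ t, 0 ≤ a t) (hM : ∀ t, a t ≤ M)
    (u v : ℝ) : IntervalIntegrable a volume u v := by
  rw [intervalIntegrable_iff]
  refine Integrable.mono' (g := fun _ => M) (integrableOn_const measure_Ioc_lt_top.ne)
    ha.aestronglyMeasurable.restrict ?_
  filter_upwards with t
  rw [Real.norm_eq_abs, abs_of_nonneg (h0 t)]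
  exact hM t

lemma cum_add_int (ha : Measurable a) (h0 : ∀ t, 0 ≤ a t) (hM : ∀ t, a t ≤ M)
    (s t : ℝ) : cum a t = cum a s + ∫ u in s..t, a u :=
  (intervalIntegral.integral_add_adjacent_intervals
    (intInt_of_bounds ha h0 hM 0 s) (intInt_of_bounds ha h0 hM s t)).symm

lemma cum_mono (ha : Measurable a) (h0 : ∀ t, 0 ≤ a t) (hM : ∀ t, a t ≤ M)
    {s t : ℝ} (h : s ≤ t) : cum a s ≤ cum a t := by
  rw [cum_add_int ha h0 hM s t]
  have : 0 ≤ ∫ u in s..t, a u :=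
    intervalIntegral.integral_nonneg h (fun u _ => h0 u)
  linarith

lemma cum_zero : cum a 0 = 0 := intervalIntegral.integral_same

lemma cum_nonneg (ha : Measurable a) (h0 : ∀ t, 0 ≤ a t) (hM : ∀ t, a t ≤ M)
    {t : ℝ} (ht : 0 ≤ t) : 0 ≤ cum a t := by
  have := cum_mono ha h0 hM ht (s := 0)
  rwa [cum_zero] at this

lemma cum_diff_le (ha : Measurable a) (h0 : ∀ t, 0 ≤ a t) (hM : ∀ t, a t ≤ M)
    {s t : ℝ} (h : s ≤ t) : cum a t - cum a s ≤ M * (t - s) := by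
  rw [cum_add_int ha h0 hM s t]
  have : (∫ u in s..t, a u) ≤ ∫ _u in s..t, M :=
    intervalIntegral.integral_mono_on h (intInt_of_bounds ha h0 hM s t)
      intervalIntegrable_const (fun u _ => hM u)
  rw [intervalIntegral.integral_const, smul_eq_mul] at this
  linarith

lemma cum_continuous (ha : Measurable a) (h0 : ∀ t, 0 ≤ a t) (hM : ∀ t, a t ≤ M) :
    Continuous (cum a) :=
  intervalIntegral.continuous_primitive (intInt_of_bounds ha h0 hM) 0

lemma intInt_mul (ha : Measurable a) (h0 : ∀ t, 0 ≤ a t) (hM : ∀ t, a t ≤ M)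
    {c : ℝ → ℝ} (hc : Continuous c) (u v : ℝ) :
    IntervalIntegrable (fun s => c s * a s) volume u v := by
  obtain ⟨C, hC⟩ := (isCompact_uIcc (a := u) (b := v)).exists_bound_of_continuousOn
    hc.continuousOn
  have hM0 : 0 ≤ M := le_trans (h0 0) (hM 0)
  rw [intervalIntegrable_iff]
  refine Integrable.mono' (g := fun _ => C * M)
    (integrableOn_const measure_Ioc_lt_top.ne)
    ((hc.measurable.mul ha).aestronglyMeasurable.restrict) ?_
  rw [ae_restrict_iff' measurableSet_uIoc]
  filter_upwards with t ht
  have h1 : ‖c t‖ ≤ C := hC t (uIoc_subset_uIcc ht)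
  have h2 : |a t| ≤ M := by rw [abs_of_nonneg (h0 t)]; exact hM t
  rw [Real.norm_eq_abs, abs_mul]
  exact mul_le_mul (by rwa [Real.norm_eq_abs] at h1) h2 (abs_nonneg _)
    (le_trans (norm_nonneg _) h1)

/-- FTC for compositions with primitives of bounded measurable functions. -/
lemma master (ha : Measurable a) (h0 : ∀ t, 0 ≤ a t) (hM : ∀ t, a t ≤ M)
    {g dg : ℝ → ℝ} {L : ℝ} (hL : 0 ≤ L) (hgc : Continuous dg)
    (hg : ∀ x, 0 ≤ x → HasDerivAt g (dg x) x)
    (hdg : ∀ x y, 0 ≤ x → x ≤ y → |dg y - dg x| ≤ L * (y - x))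
    {t : ℝ} (ht : 0 ≤ t) :
    g (cum a t) = g 0 + ∫ s in (0:ℝ)..t, dg (cum a s) * a s := by
  have hM0 : 0 ≤ M := le_trans (h0 0) (hM 0)
  have Acont : Continuous (cum a) := cum_continuous ha h0 hM
  set A := cum a with hA
  set F : ℝ → ℝ := fun s => dg (A s) * a s with hF
  have hFint : ∀ u v : ℝ, IntervalIntegrable F volume u v :=
    intInt_mul ha h0 hM (hgc.comp Acont)
  set w : ℝ → ℝ := fun s => g (A s) - g 0 - ∫ u in (0:ℝ)..s, F u with hw
  have key : ∀ s u : ℝ, 0 ≤ s → s ≤ u → |w u - w s| ≤ 2 * L * M^2 * (u - s)^2 := by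
    intro s u hs hsu
    have hAs0 : 0 ≤ A s := cum_nonneg ha h0 hM hs
    have hAmono : A s ≤ A u := cum_mono ha h0 hM hsu
    set δ := A u - A s with hδ
    have hδ0 : 0 ≤ δ := by simp only [hδ]; linarith
    have hδle : δ ≤ M * (u - s) := cum_diff_le ha h0 hM hsu
    have hδeq : δ = ∫ x in s..u, a x := by
      rw [hδ]; simp only [hA]; rw [cum_add_int ha h0 hM s u]; ring
    have hsplit : w u - w s = (g (A u) - g (A s) - dg (A s) * δ)
        + (dg (A s) * δ - ∫ x in s..u, F x) := by
      have h1 : (∫ x in (0:ℝ)..u, F x) = (∫ x in (0:ℝ)..s, F x) + ∫ x in s..u, F x :=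
        (intervalIntegral.integral_add_adjacent_intervals (hFint 0 s) (hFint s u)).symm
      simp only [hw]; rw [h1]; ring
    have hterm1 : |g (A u) - g (A s) - dg (A s) * δ| ≤ L * δ * δ := by
      have hconv : Convex ℝ (Icc (A s) (A u)) := convex_Icc _ _
      have hder : ∀ z ∈ Icc (A s) (A u),
          HasDerivWithinAt (fun z => g z - dg (A s) * z) (dg z - dg (A s))
            (Icc (A s) (A u)) z := by
        intro z hz
        have h2 : HasDerivAt (fun z : ℝ => dg (A s) * z) (dg (A s)) z := by
          simpa using (hasDerivAt_id z).const_mul (dg (A s))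
        exact ((hg z (le_trans hAs0 hz.1)).sub h2).hasDerivWithinAt
      have hbound : ∀ z ∈ Icc (A s) (A u), ‖dg z - dg (A s)‖ ≤ L * δ := by
        intro z hz
        rw [Real.norm_eq_abs]
        calc |dg z - dg (A s)| ≤ L * (z - A s) := hdg _ _ hAs0 hz.1
          _ ≤ L * δ := by
              have := hz.2
              nlinarith
      have hmv := hconv.norm_image_sub_le_of_norm_hasDerivWithin_le hder hbound
        (left_mem_Icc.2 hAmono) (right_mem_Icc.2 hAmono)
      rw [Real.norm_eq_abs, Real.norm_eq_abs] at hmv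
      have heq : g (A u) - g (A s) - dg (A s) * δ
          = (g (A u) - dg (A s) * A u) - (g (A s) - dg (A s) * A s) := by
        rw [hδ]; ring
      rw [heq]
      calc |(g (A u) - dg (A s) * A u) - (g (A s) - dg (A s) * A s)|
          ≤ L * δ * |A u - A s| := hmv
        _ = L * δ * δ := by rw [← hδ, abs_of_nonneg hδ0]
    have hterm2 : |dg (A s) * δ - ∫ x in s..u, F x| ≤ L * δ * M * (u - s) := by
      have heq : dg (A s) * δ = ∫ x in s..u, dg (A s) * a x := by
        rw [intervalIntegral.integral_const_mul, ← hδeq]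
      rw [heq, ← intervalIntegral.integral_sub
        (intInt_mul ha h0 hM continuous_const s u) (hFint s u)]
      have hbd : ∀ x ∈ Set.uIoc s u, ‖dg (A s) * a x - F x‖ ≤ L * δ * M := by
        intro x hx
        rw [uIoc_of_le hsu] at hx
        have hAx1 : A s ≤ A x := cum_mono ha h0 hM hx.1.le
        have hAx2 : A x ≤ A u := cum_mono ha h0 hM hx.2
        have hdgx : |dg (A x) - dg (A s)| ≤ L * δ := by
          calc |dg (A x) - dg (A s)| ≤ L * (A x - A s) := hdg _ _ hAs0 hAx1
            _ ≤ L * δ := by nlinarith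
        have : dg (A s) * a x - F x = -((dg (A x) - dg (A s)) * a x) := by
          simp only [hF]; ring
        rw [this, Real.norm_eq_abs, abs_neg, abs_mul, abs_of_nonneg (h0 x)]
        have := hM x
        have h0x := h0 x
        nlinarith [abs_nonneg (dg (A x) - dg (A s))]
      calc |∫ x in s..u, (dg (A s) * a x - F x)|
          ≤ L * δ * M * |u - s| :=
            intervalIntegral.norm_integral_le_of_norm_le_const hbd
        _ = L * δ * M * (u - s) := by rw [abs_of_nonneg (by linarith)]
    calc |w u - w s| ≤ |g (A u) - g (A s) - dg (A s) * δ|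
          + |dg (A s) * δ - ∫ x in s..u, F x| := by rw [hsplit]; exact abs_add_le _ _
      _ ≤ 2 * L * M^2 * (u - s)^2 := by
          have hd : (0:ℝ) ≤ u - s := by linarith
          have hsq : δ * δ ≤ (M*(u-s)) * (M*(u-s)) :=
            mul_le_mul hδle hδle hδ0 (hδ0.trans hδle)
          have e1 : L * δ * δ ≤ L * (M*(u-s)) * (M*(u-s)) := by nlinarith
          have hnn : (0:ℝ) ≤ L * (M*(u-s)) := mul_nonneg hL (mul_nonneg hM0 hd)
          have e2 : L * δ * M * (u-s) ≤ L * (M*(u-s)) * (M*(u-s)) := by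
            calc L * δ * M * (u-s) = (L*(M*(u-s))) * δ := by ring
              _ ≤ (L*(M*(u-s))) * (M*(u-s)) := mul_le_mul_of_nonneg_left hδle hnn
              _ = L * (M*(u-s)) * (M*(u-s)) := by ring
          nlinarith
  have hw0 : w 0 = 0 := by
    simp only [hw, hA, cum_zero, intervalIntegral.integral_same, sub_zero, sub_self]
  have hwt : ∀ n : ℕ, 0 < n → |w t| ≤ 2 * L * M^2 * t^2 / n := by
    intro n hn
    have hne : (0:ℝ) < n := by exact_mod_cast hn
    set f : ℕ → ℝ := fun k => w (t * k / n) with hf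
    have hfn : f n = w t := by
      simp only [hf]; congr 1; field_simp
    have hf0 : f 0 = 0 := by simp [hf, hw0]
    have htel : w t = ∑ k ∈ Finset.range n, (f (k+1) - f k) := by
      rw [Finset.sum_range_sub f n, hfn, hf0, sub_zero]
    have hstep : ∀ k ∈ Finset.range n, |f (k+1) - f k| ≤ 2 * L * M^2 * (t/n)^2 := by
      intro k _
      have h1 : (0:ℝ) ≤ t * k / n := by positivity
      have h2 : t * (k:ℝ) / n ≤ t * ((k:ℝ)+1) / n := by
        apply (div_le_div_iff_of_pos_right hne).2
        nlinarith [ht]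
      have hk := key (t*(k:ℝ)/n) (t*((k:ℝ)+1)/n) h1 h2
      have hdiff : t*((k:ℝ)+1)/n - t*(k:ℝ)/n = t/n := by field_simp; ring
      rw [hdiff] at hk
      have hcast : |f (k+1) - f k| = |w (t*((k:ℝ)+1)/n) - w (t*(k:ℝ)/n)| := by
        simp only [hf, Nat.cast_add, Nat.cast_one]
      rw [hcast]
      exact hk
    calc |w t| = |∑ k ∈ Finset.range n, (f (k+1) - f k)| := by rw [htel]
      _ ≤ ∑ k ∈ Finset.range n, |f (k+1) - f k| := Finset.abs_sum_le_sum_abs _ _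
      _ ≤ ∑ _k ∈ Finset.range n, (2*L*M^2*(t/n)^2) := Finset.sum_le_sum hstep
      _ = n * (2*L*M^2*(t/n)^2) := by
          rw [Finset.sum_const, Finset.card_range, nsmul_eq_mul]
      _ = 2*L*M^2*t^2/n := by field_simp
  have hzero : w t = 0 := by
    by_contra hnz
    have habs : 0 < |w t| := abs_pos.2 hnz
    obtain ⟨n, hn⟩ := exists_nat_gt (2*L*M^2*t^2 / |w t|)
    have hCnn : (0:ℝ) ≤ 2*L*M^2*t^2 / |w t| := by positivity
    have hn0 : 0 < n := by
      rcases Nat.eq_zero_or_pos n with h | h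
      · exfalso; rw [h] at hn; norm_num at hn; linarith
      · exact h
    have h1 := hwt n hn0
    have hne : (0:ℝ) < n := by exact_mod_cast hn0
    rw [div_lt_iff₀ habs] at hn
    rw [le_div_iff₀ hne] at h1
    nlinarith
  have hfin := hzero
  simp only [hw, hF] at hfin
  linarith

lemma hasDerivAt_exp_neg (x : ℝ) :
    HasDerivAt (fun x : ℝ => Real.exp (-x)) (-Real.exp (-x)) x := by
  have h := (Real.hasDerivAt_exp (-x)).comp x (hasDerivAt_neg x)
  simpa [Function.comp_def] using h

lemma hasDerivAt_neg_exp_neg (x : ℝ) :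
    HasDerivAt (fun x : ℝ => -Real.exp (-x)) (Real.exp (-x)) x := by
  simpa [Pi.neg_def] using (hasDerivAt_exp_neg x).neg

lemma hasDerivAt_g2 (x : ℝ) :
    HasDerivAt (fun x : ℝ => -((x+1) * Real.exp (-x))) (x * Real.exp (-x)) x := by
  have hx1 : HasDerivAt (fun x : ℝ => x + 1) 1 x := (hasDerivAt_id x).add_const 1
  have h := (hx1.fun_mul (hasDerivAt_exp_neg x)).fun_neg
  exact h.congr_deriv (by ring)

lemma lip_exp_neg : ∀ x y : ℝ, 0 ≤ x → x ≤ y →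
    |Real.exp (-y) - Real.exp (-x)| ≤ 1 * (y - x) := by
  intro x y hx hxy
  have hder : ∀ z ∈ Icc x y, HasDerivWithinAt (fun z : ℝ => Real.exp (-z))
      (-Real.exp (-z)) (Icc x y) z := fun z _ => (hasDerivAt_exp_neg z).hasDerivWithinAt
  have hbd : ∀ z ∈ Icc x y, ‖-Real.exp (-z)‖ ≤ 1 := by
    intro z hz
    rw [norm_neg, Real.norm_eq_abs, abs_of_pos (Real.exp_pos _)]
    rw [show (1:ℝ) = Real.exp 0 by simp]
    exact Real.exp_le_exp.2 (by linarith [hz.1])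
  have h := (convex_Icc x y).norm_image_sub_le_of_norm_hasDerivWithin_le hder hbd
    (left_mem_Icc.2 hxy) (right_mem_Icc.2 hxy)
  rw [Real.norm_eq_abs, Real.norm_eq_abs, abs_of_nonneg (by linarith : (0:ℝ) ≤ y - x)] at h
  exact h

lemma lip_dg2 : ∀ x y : ℝ, 0 ≤ x → x ≤ y →
    |y * Real.exp (-y) - x * Real.exp (-x)| ≤ 1 * (y - x) := by
  intro x y hx hxy
  have hder : ∀ z ∈ Icc x y, HasDerivWithinAt (fun z : ℝ => z * Real.exp (-z))
      ((1 - z) * Real.exp (-z)) (Icc x y) z := by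
    intro z _
    have h := (hasDerivAt_id z).fun_mul (hasDerivAt_exp_neg z)
    simp only [id_eq] at h
    have h2 : HasDerivAt (fun z : ℝ => z * Real.exp (-z)) ((1 - z) * Real.exp (-z)) z := by
      exact h.congr_deriv (by ring)
    exact h2.hasDerivWithinAt
  have hbd : ∀ z ∈ Icc x y, ‖(1 - z) * Real.exp (-z)‖ ≤ 1 := by
    intro z hz
    have hz0 : 0 ≤ z := le_trans hx hz.1
    rw [Real.norm_eq_abs, abs_mul, abs_of_pos (Real.exp_pos _)]
    rcases le_or_gt z 1 with h | h
    · rw [abs_of_nonneg (by linarith)]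
      have he : Real.exp (-z) ≤ 1 := by
        rw [show (1:ℝ) = Real.exp 0 by simp]
        exact Real.exp_le_exp.2 (by linarith)
      nlinarith [Real.exp_pos (-z)]
    · rw [abs_of_neg (by linarith)]
      have h1 : z - 1 ≤ Real.exp (z - 1) := by
        have := Real.add_one_le_exp (z - 1)
        linarith
      have h2 : -(1-z) * Real.exp (-z) ≤ Real.exp (z-1) * Real.exp (-z) := by
        apply mul_le_mul_of_nonneg_right _ (Real.exp_pos _).le
        linarith
      have h3 : Real.exp (z-1) * Real.exp (-z) = Real.exp (-1) := by
        rw [← Real.exp_add]; ring_nf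
      have h4 : Real.exp (-1:ℝ) ≤ 1 := by
        rw [show (1:ℝ) = Real.exp 0 by simp]
        exact Real.exp_le_exp.2 (by norm_num)
      linarith
  have h := (convex_Icc x y).norm_image_sub_le_of_norm_hasDerivWithin_le hder hbd
    (left_mem_Icc.2 hxy) (right_mem_Icc.2 hxy)
  rw [Real.norm_eq_abs, Real.norm_eq_abs, abs_of_nonneg (by linarith : (0:ℝ) ≤ y - x)] at h
  exact h

/-- E1: `∫₀ᵗ e^{-A} a = 1 - e^{-A(t)}`. -/
lemma E1 (ha : Measurable a) (h0 : ∀ t, 0 ≤ a t) (hM : ∀ t, a t ≤ M)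
    {t : ℝ} (ht : 0 ≤ t) :
    (∫ s in (0:ℝ)..t, Real.exp (-(cum a s)) * a s) = 1 - Real.exp (-(cum a t)) := by
  have h := master ha h0 hM (g := fun x => -Real.exp (-x)) (dg := fun x => Real.exp (-x))
    (L := 1) zero_le_one (by continuity) (fun x _ => hasDerivAt_neg_exp_neg x)
    lip_exp_neg ht
  simp only [neg_zero, Real.exp_zero] at h
  linarith

/-- E2: `∫₀ᵗ A e^{-A} a = 1 - (A(t)+1) e^{-A(t)}`. -/
lemma E2 (ha : Measurable a) (h0 : ∀ t, 0 ≤ a t) (hM : ∀ t, a t ≤ M)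
    {t : ℝ} (ht : 0 ≤ t) :
    (∫ s in (0:ℝ)..t, (cum a s * Real.exp (-(cum a s))) * a s)
      = 1 - (cum a t + 1) * Real.exp (-(cum a t)) := by
  have h := master ha h0 hM (g := fun x => -((x+1) * Real.exp (-x)))
    (dg := fun x => x * Real.exp (-x)) (L := 1) zero_le_one (by continuity)
    (fun x _ => hasDerivAt_g2 x) lip_dg2 ht
  simp only [neg_zero, Real.exp_zero, zero_add, one_mul, mul_one] at h
  linarith

end helpers

section part2

lemma threshold_measurable (β ψ : ℝ) : Measurable (threshold β ψ) :=
  Measurable.ite measurableSet_Icc measurable_const measurable_const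

lemma threshold_nonneg {β : ℝ} (ψ : ℝ) (hβ : 0 ≤ β) (t : ℝ) : 0 ≤ threshold β ψ t := by
  unfold threshold; split <;> simp [hβ]

lemma threshold_le {β : ℝ} (ψ : ℝ) (hβ : 0 ≤ β) (t : ℝ) : threshold β ψ t ≤ β := by
  unfold threshold; split <;> simp [hβ]

lemma cum_threshold_of_le {β ψ s : ℝ} (hs : 0 ≤ s) (h : s ≤ ψ) :
    cum (threshold β ψ) s = β * s := by
  unfold cum
  rw [intervalIntegral.integral_congr (g := fun _ => β) ?_]
  · rw [intervalIntegral.integral_const, smul_eq_mul, sub_zero, mul_comm]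
  · intro u hu
    rw [uIcc_of_le hs] at hu
    unfold threshold
    rw [if_pos ⟨hu.1, le_trans hu.2 h⟩]

lemma cum_threshold {β ψ : ℝ} (hβ : 0 ≤ β) (hψ : 0 ≤ ψ) {s : ℝ} (hs : 0 ≤ s) :
    cum (threshold β ψ) s = β * min s ψ := by
  rcases le_or_gt s ψ with h | h
  · rw [min_eq_left h, cum_threshold_of_le hs h]
  · rw [min_eq_right h.le]
    have hsplit := cum_add_int (threshold_measurable β ψ) (threshold_nonneg ψ hβ)
      (threshold_le ψ hβ) ψ s
    have h1 : cum (threshold β ψ) ψ = β * ψ := cum_threshold_of_le hψ le_rfl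
    have h2 : (∫ u in ψ..s, threshold β ψ u) = 0 := by
      rw [intervalIntegral.integral_of_le h.le]
      rw [MeasureTheory.setIntegral_congr_fun measurableSet_Ioc (g := fun _ => (0:ℝ)) ?_]
      · simp
      · intro u hu
        unfold threshold
        rw [if_neg]
        exact fun hc => absurd hc.2 (not_le.2 hu.1)
    rw [hsplit, h1, h2, add_zero]

/-- E3: the mixed identity on `[0,ψ]`. -/
lemma E3 {a : ℝ → ℝ} {M βj : ℝ} (ha : Measurable a) (h0 : ∀ t, 0 ≤ a t) (hM : ∀ t, a t ≤ M)
    (hβj : 0 ≤ βj) {ψ : ℝ} (hψ : 0 ≤ ψ) :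
    (∫ s in (0:ℝ)..ψ, Real.exp (-(βj * s) - cum a s) * (a s + βj))
      = 1 - Real.exp (-(βj * ψ) - cum a ψ) := by
  set at' : ℝ → ℝ := fun u => a u + βj with hat
  have hat_meas : Measurable at' := ha.add_const βj
  have hat0 : ∀ t, 0 ≤ at' t := fun t => by simp only [hat]; linarith [h0 t]
  have hatM : ∀ t, at' t ≤ M + βj := fun t => by simp only [hat]; linarith [hM t]
  have hcum : ∀ s : ℝ, cum at' s = cum a s + βj * s := by
    intro s
    unfold cum
    rw [intervalIntegral.integral_add (intInt_of_bounds ha h0 hM 0 s) intervalIntegrable_const,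
      intervalIntegral.integral_const, smul_eq_mul, sub_zero, mul_comm]
  have h := E1 hat_meas hat0 hatM hψ
  rw [hcum ψ] at h
  rw [show -(βj * ψ) - cum a ψ = -(cum a ψ + βj * ψ) from by ring]
  rw [← h]
  apply intervalIntegral.integral_congr
  intro s _
  show Real.exp (-(βj * s) - cum a s) * (a s + βj) = Real.exp (-(cum at' s)) * at' s
  rw [hcum s, show -(βj * s) - cum a s = -(cum a s + βj * s) from by ring]

/-- closed formula for the payoff against a threshold opponent -/
lemma payoff_formula {T ν βj ψ M : ℝ} (hβj : 0 < βj)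
    (hψ0 : 0 ≤ ψ) (hψT : ψ ≤ T)
    {a : ℝ → ℝ} (ha : Measurable a) (h0 : ∀ t, 0 ≤ a t) (hM : ∀ t, a t ≤ M) :
    oneLockPayoff T ν a (threshold βj ψ)
      = 1 - ν + (ν - Real.exp (-(βj * ψ))) * Real.exp (-(cum a T))
        - βj * ∫ s in (0:ℝ)..ψ, Real.exp (-(βj * s) - cum a s) := by
  have hT0 : (0:ℝ) ≤ T := le_trans hψ0 hψT
  have hAc : Continuous (cum a) := cum_continuous ha h0 hM
  have hexpA : Continuous fun s => Real.exp (-(cum a s)) := Real.continuous_exp.comp hAc.neg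
  -- the five continuous coefficient functions
  have hc1 : Continuous fun s => (Real.exp (-(βj * s)) - ν * cum a s) * Real.exp (-(cum a s)) :=
    ((Real.continuous_exp.comp (continuous_const.mul continuous_id).neg).sub
      (continuous_const.mul hAc)).mul hexpA
  have hc2 : Continuous fun s => (Real.exp (-(βj * ψ)) - ν * cum a s) * Real.exp (-(cum a s)) :=
    ((continuous_const).sub (continuous_const.mul hAc)).mul hexpA
  have hcp : Continuous fun s => Real.exp (-(βj * s) - cum a s) :=
    Real.continuous_exp.comp (((continuous_const.mul continuous_id).neg).sub hAc)
  have hcr : Continuous fun s => cum a s * Real.exp (-(cum a s)) := hAc.mul hexpA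
  -- step 1: replace cum (threshold βj ψ) by βj * min s ψ then split at ψ
  have h1 : (∫ s in (0:ℝ)..T,
        (Real.exp (-(cum (threshold βj ψ) s)) - ν * cum a s) * Real.exp (-(cum a s)) * a s)
      = (∫ s in (0:ℝ)..ψ,
          (Real.exp (-(βj * s)) - ν * cum a s) * Real.exp (-(cum a s)) * a s)
        + ∫ s in ψ..T,
            (Real.exp (-(βj * ψ)) - ν * cum a s) * Real.exp (-(cum a s)) * a s := by
    have e0 : (∫ s in (0:ℝ)..T,
          (Real.exp (-(cum (threshold βj ψ) s)) - ν * cum a s) * Real.exp (-(cum a s)) * a s)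
        = ∫ s in (0:ℝ)..T,
            (Real.exp (-(βj * min s ψ)) - ν * cum a s) * Real.exp (-(cum a s)) * a s := by
      apply intervalIntegral.integral_congr
      intro s hs
      dsimp only
      rw [uIcc_of_le hT0] at hs
      rw [cum_threshold hβj.le hψ0 hs.1]
    have hcmin : Continuous fun s => (Real.exp (-(βj * min s ψ)) - ν * cum a s)
        * Real.exp (-(cum a s)) :=
      ((Real.continuous_exp.comp
        (continuous_const.mul (continuous_id.min continuous_const)).neg).sub
        (continuous_const.mul hAc)).mul hexpA
    have esplit : (∫ s in (0:ℝ)..T,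
          (Real.exp (-(βj * min s ψ)) - ν * cum a s) * Real.exp (-(cum a s)) * a s)
        = (∫ s in (0:ℝ)..ψ,
            (Real.exp (-(βj * min s ψ)) - ν * cum a s) * Real.exp (-(cum a s)) * a s)
          + ∫ s in ψ..T,
              (Real.exp (-(βj * min s ψ)) - ν * cum a s) * Real.exp (-(cum a s)) * a s :=
      (intervalIntegral.integral_add_adjacent_intervals
        (intInt_mul ha h0 hM hcmin 0 ψ) (intInt_mul ha h0 hM hcmin ψ T)).symm
    have e1 : (∫ s in (0:ℝ)..ψ,
          (Real.exp (-(βj * min s ψ)) - ν * cum a s) * Real.exp (-(cum a s)) * a s)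
        = ∫ s in (0:ℝ)..ψ,
            (Real.exp (-(βj * s)) - ν * cum a s) * Real.exp (-(cum a s)) * a s := by
      apply intervalIntegral.integral_congr
      intro s hs
      dsimp only
      rw [uIcc_of_le hψ0] at hs
      rw [min_eq_left hs.2]
    have e2 : (∫ s in ψ..T,
          (Real.exp (-(βj * min s ψ)) - ν * cum a s) * Real.exp (-(cum a s)) * a s)
        = ∫ s in ψ..T,
            (Real.exp (-(βj * ψ)) - ν * cum a s) * Real.exp (-(cum a s)) * a s := by
      apply intervalIntegral.integral_congr
      intro s hs
      dsimp only
      rw [uIcc_of_le hψT] at hs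
      rw [min_eq_right hs.1]
    rw [e0, esplit, e1, e2]
  -- step 2: expand the [0,ψ] piece
  have h2 : (∫ s in (0:ℝ)..ψ,
        (Real.exp (-(βj * s)) - ν * cum a s) * Real.exp (-(cum a s)) * a s)
      = (∫ s in (0:ℝ)..ψ, Real.exp (-(βj * s) - cum a s) * a s)
        - ν * ∫ s in (0:ℝ)..ψ, (cum a s * Real.exp (-(cum a s))) * a s := by
    rw [← intervalIntegral.integral_const_mul,
      ← intervalIntegral.integral_sub (intInt_mul ha h0 hM hcp 0 ψ) ?_]
    · apply intervalIntegral.integral_congr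
      intro s _
      dsimp only
      rw [show -(βj * s) - cum a s = -(βj * s) + -(cum a s) from by ring, Real.exp_add]
      ring
    · have : (fun s => ν * ((cum a s * Real.exp (-(cum a s))) * a s))
          = fun s => (ν * (cum a s * Real.exp (-(cum a s)))) * a s := by
        funext s; ring
      rw [this]
      exact intInt_mul ha h0 hM (continuous_const.mul hcr) 0 ψ
  -- step 3: expand the [ψ,T] piece
  have h3 : (∫ s in ψ..T,
        (Real.exp (-(βj * ψ)) - ν * cum a s) * Real.exp (-(cum a s)) * a s)
      = Real.exp (-(βj * ψ)) * (∫ s in ψ..T, Real.exp (-(cum a s)) * a s)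
        - ν * ∫ s in ψ..T, (cum a s * Real.exp (-(cum a s))) * a s := by
    rw [← intervalIntegral.integral_const_mul, ← intervalIntegral.integral_const_mul,
      ← intervalIntegral.integral_sub ?_ ?_]
    · apply intervalIntegral.integral_congr
      intro s _
      dsimp only
      ring
    · have : (fun s => Real.exp (-(βj * ψ)) * (Real.exp (-(cum a s)) * a s))
          = fun s => (Real.exp (-(βj * ψ)) * Real.exp (-(cum a s))) * a s := by
        funext s; ring
      rw [this]
      exact intInt_mul ha h0 hM (continuous_const.mul hexpA) ψ T
    · have : (fun s => ν * ((cum a s * Real.exp (-(cum a s))) * a s))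
          = fun s => (ν * (cum a s * Real.exp (-(cum a s)))) * a s := by
        funext s; ring
      rw [this]
      exact intInt_mul ha h0 hM (continuous_const.mul hcr) ψ T
  -- step 4: values
  have h4 : (∫ s in (0:ℝ)..ψ, (cum a s * Real.exp (-(cum a s))) * a s)
        + (∫ s in ψ..T, (cum a s * Real.exp (-(cum a s))) * a s)
      = 1 - (cum a T + 1) * Real.exp (-(cum a T)) := by
    rw [intervalIntegral.integral_add_adjacent_intervals
      (intInt_mul ha h0 hM hcr 0 ψ) (intInt_mul ha h0 hM hcr ψ T)]
    exact E2 ha h0 hM hT0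
  have h5 : (∫ s in ψ..T, Real.exp (-(cum a s)) * a s)
      = Real.exp (-(cum a ψ)) - Real.exp (-(cum a T)) := by
    have hadd := intervalIntegral.integral_add_adjacent_intervals
      (intInt_mul ha h0 hM hexpA 0 ψ) (intInt_mul ha h0 hM hexpA ψ T)
    have e01 := E1 ha h0 hM hψ0
    have e02 := E1 ha h0 hM hT0
    rw [e01] at hadd
    rw [e02] at hadd
    linarith
  have h6 : (∫ s in (0:ℝ)..ψ, Real.exp (-(βj * s) - cum a s) * a s)
      = 1 - Real.exp (-(βj * ψ) - cum a ψ)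
        - βj * ∫ s in (0:ℝ)..ψ, Real.exp (-(βj * s) - cum a s) := by
    have he3 := E3 ha h0 hM hβj.le hψ0
    have hsplit : (∫ s in (0:ℝ)..ψ, Real.exp (-(βj * s) - cum a s) * (a s + βj))
        = (∫ s in (0:ℝ)..ψ, Real.exp (-(βj * s) - cum a s) * a s)
          + βj * ∫ s in (0:ℝ)..ψ, Real.exp (-(βj * s) - cum a s) := by
      rw [← intervalIntegral.integral_const_mul,
        ← intervalIntegral.integral_add (intInt_mul ha h0 hM hcp 0 ψ) ?_]
      · apply intervalIntegral.integral_congr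
        intro s _
        dsimp only
        ring
      · exact (hcp.intervalIntegrable 0 ψ).const_mul βj
    rw [hsplit] at he3
    linarith
  have h7 : Real.exp (-(βj * ψ) - cum a ψ) = Real.exp (-(βj * ψ)) * Real.exp (-(cum a ψ)) := by
    rw [← Real.exp_add]; ring_nf
  rw [oneLockPayoff, h1, h2, h3, h5, h6]
  rw [h7]
  linear_combination (-ν) * h4

end part2

/-- Paper's Theorem 2, first case: if agent `j` plays `Γ_{βʲ}(ψ)` and
`ν < e^{−βʲψ}`, the full-effort control `Γ_{βⁱ}(T)` is a best response
of agent `i`. -/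
theorem best_response_full_effort
    (T ν βi βj ψ : ℝ) (hT : 0 < T) (hν0 : 0 < ν) (hν1 : ν < 1)
    (hβi : 0 < βi) (hβj : 0 < βj) (hψ : ψ ∈ Icc (0:ℝ) T)
    (hcase : ν < Real.exp (-(βj * ψ))) :
    ∀ a : ℝ → ℝ, Measurable a → (∀ t ∈ Icc (0:ℝ) T, a t ∈ Icc (0:ℝ) βi) →
      oneLockPayoff T ν a (threshold βj ψ)
        ≤ oneLockPayoff T ν (threshold βi T) (threshold βj ψ) := by
  intro a ha hbound
  set a' : ℝ → ℝ := fun t => if t ∈ Icc (0:ℝ) T then a t else 0 with ha'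
  have ha'_meas : Measurable a' := Measurable.ite measurableSet_Icc ha measurable_const
  have ha'0 : ∀ t, 0 ≤ a' t := by
    intro t; simp only [ha']; split
    · exact (hbound t ‹_›).1
    · exact le_rfl
  have ha'M : ∀ t, a' t ≤ βi := by
    intro t; simp only [ha']; split
    · exact (hbound t ‹_›).2
    · exact hβi.le
  have hcum_eq : ∀ s ∈ Icc (0:ℝ) T, cum a s = cum a' s := by
    intro s hs
    apply intervalIntegral.integral_congr
    intro u hu
    rw [uIcc_of_le hs.1] at hu
    simp only [ha']
    rw [if_pos (mem_Icc.2 ⟨hu.1, le_trans hu.2 hs.2⟩)]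
  have hpay : oneLockPayoff T ν a (threshold βj ψ) = oneLockPayoff T ν a' (threshold βj ψ) := by
    unfold oneLockPayoff
    rw [hcum_eq T ⟨hT.le, le_rfl⟩]
    congr 1
    apply intervalIntegral.integral_congr
    intro s hs
    rw [uIcc_of_le hT.le] at hs
    dsimp only
    rw [hcum_eq s hs, show a s = a' s from by simp only [ha']; rw [if_pos hs]]
  have hth_meas := threshold_measurable βi T
  have hth0 := threshold_nonneg (β := βi) T hβi.le
  have hthM := threshold_le (β := βi) T hβi.le
  rw [hpay, payoff_formula hβj hψ.1 hψ.2 ha'_meas ha'0 ha'M,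
      payoff_formula hβj hψ.1 hψ.2 hth_meas hth0 hthM]
  have hcν : ν - Real.exp (-(βj * ψ)) ≤ 0 := by linarith
  have hAT : cum a' T ≤ cum (threshold βi T) T := by
    rw [cum_threshold_of_le hT.le le_rfl]
    have h := cum_diff_le ha'_meas ha'0 ha'M (s := 0) (t := T) hT.le
    rw [cum_zero] at h
    linarith
  have hterm1 : (ν - Real.exp (-(βj * ψ))) * Real.exp (-(cum a' T))
      ≤ (ν - Real.exp (-(βj * ψ))) * Real.exp (-(cum (threshold βi T) T)) :=
    mul_le_mul_of_nonpos_left (Real.exp_le_exp.2 (by linarith)) hcν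
  have hAc' : Continuous (cum a') := cum_continuous ha'_meas ha'0 ha'M
  have hActh : Continuous (cum (threshold βi T)) := cum_continuous hth_meas hth0 hthM
  have hQ : (∫ s in (0:ℝ)..ψ, Real.exp (-(βj * s) - cum (threshold βi T) s))
      ≤ ∫ s in (0:ℝ)..ψ, Real.exp (-(βj * s) - cum a' s) := by
    apply intervalIntegral.integral_mono_on hψ.1
      ((Real.continuous_exp.comp
        (((continuous_const.mul continuous_id).neg).sub hActh)).intervalIntegrable 0 ψ)
      ((Real.continuous_exp.comp
        (((continuous_const.mul continuous_id).neg).sub hAc')).intervalIntegrable 0 ψ)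
    intro s hs
    apply Real.exp_le_exp.2
    show -(βj * s) - cum (threshold βi T) s ≤ -(βj * s) - cum a' s
    have h1 : cum a' s ≤ cum (threshold βi T) s := by
      rw [cum_threshold_of_le hs.1 (le_trans hs.2 hψ.2)]
      have h := cum_diff_le ha'_meas ha'0 ha'M (s := 0) (t := s) hs.1
      rw [cum_zero] at h
      linarith
    linarith
  linarith [hterm1, mul_le_mul_of_nonneg_left hQ hβj.le]
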